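/- With φ_stt = ((M−K−N)/(M−K)) φ_sps as above, S, I > 0, 0 ≤ ω_Δ ≤ ω, let γ_stt(φ) = S/(I + ωφ) and γ_sps(φ) = S/(I + (ω−ω_Δ)φ). Then γ_sps(φ_sps) ≥ γ_stt(φ_stt) if and only if ω_Δ ≥ (N/(M−K)) ω. -/

import Mathlib

/-- Cross-point condition (`R^UL_cross ≥ 1`): under the downlink power scaling
law `φ_stt = ((M−K−N)/(M−K)) φ_sps`, spatial suppression yields higher uplink
SINR than SI subtraction iff `ω_Δ ≥ (N/(M−K)) ω`. -/
theorem stmt_15 (M N K : ℕ) (hM : N + K < M) (hK : 1 ≤ K) (hN : 1 ≤ N)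
    (S I ω ωΔ : ℝ) (hS : 0 < S) (hI : 0 < I) (hωΔ : 0 ≤ ωΔ) (hω : ωΔ ≤ ω)
    (γstt γsps : ℝ → ℝ)
    (hstt : ∀ φ, γstt φ = S / (I + ω * φ))
    (hsps : ∀ φ, γsps φ = S / (I + (ω - ωΔ) * φ))
    (φstt φsps : ℝ) (hφsps : 0 < φsps)
    (hscale : φstt = (((M : ℝ) - K - N) / ((M : ℝ) - K)) * φsps) :
    γstt φstt ≤ γsps φsps ↔ ((N : ℝ) / ((M : ℝ) - K)) * ω ≤ ωΔ := by
  have hMc : (N : ℝ) + K < M := by exact_mod_cast hM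
  have hc : (0 : ℝ) < (M : ℝ) - K := by
    have : (1 : ℝ) ≤ N := by exact_mod_cast hN
    linarith
  have hcn : (0 : ℝ) < (M : ℝ) - K - N := by linarith
  have hω0 : (0 : ℝ) ≤ ω := le_trans hωΔ hω
  have h1 : 0 < I + ω * φstt := by
    have : 0 ≤ ω * φstt := by
      rw [hscale]; positivity
    linarith
  have h2 : 0 < I + (ω - ωΔ) * φsps := by
    have h' : 0 ≤ ω - ωΔ := by linarith
    nlinarith
  have ht : ((M : ℝ) - K) * φstt = ((M : ℝ) - K - N) * φsps := by
    rw [hscale]; field_simp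
  have hrhs : (((N : ℝ) / ((M : ℝ) - K)) * ω ≤ ωΔ) ↔ (N : ℝ) * ω ≤ ωΔ * ((M : ℝ) - K) := by
    rw [div_mul_eq_mul_div, div_le_iff₀ hc]
  rw [hstt, hsps, div_le_div_iff₀ h1 h2, hrhs]
  constructor
  · intro h
    have h' : I + (ω - ωΔ) * φsps ≤ I + ω * φstt := (mul_le_mul_iff_right₀ hS).mp h
    nlinarith [mul_le_mul_of_nonneg_right h' hc.le]
  · intro h
    have h' : I + (ω - ωΔ) * φsps ≤ I + ω * φstt := by
      nlinarith [mul_le_mul_of_nonneg_right h hφsps.le]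
    exact (mul_le_mul_iff_right₀ hS).mpr h'
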